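/- arXiv:0711.2373 — 3 statements merged into one kernel-verified Lean document; each statement's English description precedes it below -/
import Mathlib

section
/- Let (Xₜ)_{t∈ℕ} be a submartingale with respect to a filtration (𝓕ₜ), with increments bounded by B₁: |Xₜ - Xₜ₋₁| ≤ B₁ almost surely. Then for all h, b, x > 0, P(inf_{0 ≤ t ≤ h x²} Xₜ < X₀ - b x) ≤ 4 h B₁² / b². -/
open MeasureTheory Finset
open scoped ENNReal NNReal

/-- If `(Xₜ)` is a submartingale with increments bounded by `B₁`, then for all `h, b, x > 0`,
`P(inf_{0 ≤ t ≤ h x²} Xₜ < X₀ - b x) ≤ 4 h B₁² / b²`. -/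
theorem stmt_6 {Ω : Type*} {m0 : MeasurableSpace Ω} (μ : Measure Ω) [IsProbabilityMeasure μ]
    (ℱ : Filtration ℕ m0) (X : ℕ → Ω → ℝ) (B₁ : ℝ) (hB₁ : 0 < B₁)
    (hsub : Submartingale X ℱ μ)
    (hbd : ∀ t : ℕ, ∀ᵐ ω ∂μ, |X (t + 1) ω - X t ω| ≤ B₁) :
    ∀ h b x : ℝ, 0 < h → 0 < b → 0 < x →
      μ {ω | ∃ t : ℕ, (t : ℝ) ≤ h * x ^ 2 ∧ X t ω < X 0 ω - b * x} ≤
        ENNReal.ofReal (4 * h * B₁ ^ 2 / b ^ 2) := by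
  intro h b x hh hb hx
  set M : ℕ → Ω → ℝ := martingalePart X ℱ μ with hMdef
  have hM : Martingale M ℱ μ := martingale_martingalePart hsub.stronglyAdapted hsub.integrable
  have hMadp : StronglyAdapted ℱ M := hM.stronglyAdapted
  have hM0 : M 0 = X 0 := by
    funext ω; simp [hMdef, martingalePart, predictablePart]
  -- increments of M bounded by 2 B₁ a.e.
  have hMinc : ∀ k : ℕ, ∀ᵐ ω ∂μ, |M (k + 1) ω - M k ω| ≤ 2 * B₁ := by
    intro k
    have hXint : Integrable (X (k + 1) - X k) μ := (hsub.integrable _).sub (hsub.integrable _)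
    have hce1 : μ[X (k + 1) - X k|ℱ k] ≤ᵐ[μ] fun _ => B₁ := by
      have := condExp_mono (m := ℱ k) hXint (integrable_const B₁)
        (by filter_upwards [hbd k] with ω hω; exact le_trans (le_abs_self _) hω)
      calc μ[X (k + 1) - X k|ℱ k] ≤ᵐ[μ] μ[(fun _ => B₁)|ℱ k] := this
        _ =ᵐ[μ] fun _ => B₁ := by rw [condExp_const (ℱ.le k)]
    have hce2 : (fun _ => -B₁ : Ω → ℝ) ≤ᵐ[μ] μ[X (k + 1) - X k|ℱ k] := by
      have := condExp_mono (m := ℱ k) (integrable_const (-B₁)) hXint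
        (by filter_upwards [hbd k] with ω hω; exact neg_le_of_abs_le hω)
      calc (fun _ => -B₁ : Ω → ℝ) =ᵐ[μ] μ[(fun _ => -B₁)|ℱ k] := by rw [condExp_const (ℱ.le k)]
        _ ≤ᵐ[μ] μ[X (k + 1) - X k|ℱ k] := this
    have hMk : M (k + 1) - M k = (X (k + 1) - X k) - μ[X (k + 1) - X k|ℱ k] := by
      funext ω
      simp only [hMdef, martingalePart, predictablePart, Pi.sub_apply,
        Finset.sum_range_succ, Finset.sum_apply, Pi.add_apply]
      ring
    filter_upwards [hbd k, hce1, hce2] with ω h1 h2 h3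
    have : M (k + 1) ω - M k ω = (X (k + 1) ω - X k ω) - (μ[X (k + 1) - X k|ℱ k]) ω := by
      have := congrFun hMk ω; simpa using this
    rw [this, abs_le]
    rw [abs_le] at h1
    constructor <;> nlinarith [h1.1, h1.2, h2, h3]

  -- the centered martingale `Y`, its square `G`
  set Y : ℕ → Ω → ℝ := fun k ω => M k ω - M 0 ω with hYdef
  set G : ℕ → Ω → ℝ := fun k ω => (M k ω - M 0 ω) ^ 2 with hGdef
  have hYsm : ∀ k, StronglyMeasurable[ℱ k] (Y k) := fun k =>
    (hMadp k).sub ((hMadp 0).mono (ℱ.mono (Nat.zero_le k)))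
  have hGsm : ∀ k, StronglyMeasurable[ℱ k] (G k) := fun k => by
    simpa [hGdef, hYdef, pow_two, Pi.mul_def] using (hYsm k).mul (hYsm k)
  have hYbd : ∀ᵐ ω ∂μ, ∀ k, |Y k ω| ≤ 2 * B₁ * k := by
    filter_upwards [ae_all_iff.2 hMinc] with ω hω
    intro k
    induction k with
    | zero => simp [hYdef]
    | succ k ih =>
      have h1 := hω k
      have : |Y (k + 1) ω| ≤ |M (k + 1) ω - M k ω| + |Y k ω| := by
        have : Y (k + 1) ω = (M (k + 1) ω - M k ω) + Y k ω := by simp only [hYdef]; ring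
        rw [this]; exact abs_add_le _ _
      push_cast
      nlinarith [abs_nonneg (Y k ω)]
  have hGbd : ∀ k, ∀ᵐ ω ∂μ, ‖G k ω‖ ≤ (2 * B₁ * k) ^ 2 := by
    intro k
    filter_upwards [hYbd] with ω hω
    rw [Real.norm_eq_abs]
    show |(M k ω - M 0 ω) ^ 2| ≤ (2 * B₁ * k) ^ 2
    rw [abs_pow]
    exact pow_le_pow_left₀ (abs_nonneg _) (hω k) 2
  have hGint : ∀ k, Integrable (G k) μ := fun k =>
    Integrable.mono' (integrable_const ((2 * B₁ * k) ^ 2))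
      (((hGsm k).mono (ℱ.le k)).aestronglyMeasurable) (hGbd k)
  -- key conditional expectation computation
  have hkey : ∀ k, μ[G (k + 1)|ℱ k] =ᵐ[μ]
      fun ω => G k ω + (μ[fun ω => (M (k + 1) ω - M k ω) ^ 2|ℱ k]) ω := by
    intro k
    set d : Ω → ℝ := fun ω => M (k + 1) ω - M k ω with hddef
    have hdint : Integrable d μ := (hM.integrable _).sub (hM.integrable _)
    have hd2int : Integrable (fun ω => d ω ^ 2) μ := by
      refine Integrable.mono' (integrable_const ((2 * B₁) ^ 2)) ?_ ?_
      · have := hdint.1.mul hdint.1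
        simpa [pow_two, Pi.mul_def] using this
      · filter_upwards [hMinc k] with ω hω
        rw [Real.norm_eq_abs, abs_pow]
        exact pow_le_pow_left₀ (abs_nonneg _) hω 2
    have hYbd' : ∀ᵐ ω ∂μ, ‖2 * Y k ω‖ ≤ 2 * (2 * B₁ * k) := by
      filter_upwards [hYbd] with ω hω
      rw [Real.norm_eq_abs, abs_mul, abs_two]
      nlinarith [hω k]
    have hprodint : Integrable ((fun ω => 2 * Y k ω) * d) μ :=
      hdint.bdd_mul (((hYsm k).const_mul 2).mono (ℱ.le k)).aestronglyMeasurable hYbd'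
    have hdce : μ[d|ℱ k] =ᵐ[μ] 0 := by
      have h1 : μ[M (k + 1) - M k|ℱ k] =ᵐ[μ] μ[M (k + 1)|ℱ k] - μ[M k|ℱ k] :=
        condExp_sub (hM.integrable _) (hM.integrable _) _
      have h2 : μ[M (k + 1)|ℱ k] =ᵐ[μ] M k := hM.condExp_ae_eq (Nat.le_succ k)
      have h3 : μ[M k|ℱ k] =ᵐ[μ] M k := hM.condExp_ae_eq le_rfl
      have : (μ[d|ℱ k]) = μ[M (k + 1) - M k|ℱ k] := by rfl
      rw [this]
      filter_upwards [h1, h2, h3] with ω e1 e2 e3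
      simp only [Pi.sub_apply] at e1
      simp [e1, e2, e3]
    have hpull : μ[(fun ω => 2 * Y k ω) * d|ℱ k] =ᵐ[μ] (fun ω => 2 * Y k ω) * μ[d|ℱ k] :=
      condExp_mul_of_stronglyMeasurable_left ((hYsm k).const_mul 2) hprodint hdint
    have hsq : μ[G k|ℱ k] = G k :=
      condExp_of_stronglyMeasurable (ℱ.le k) (hGsm k) (hGint k)
    have hexp : G (k + 1) = G k + ((fun ω => 2 * Y k ω) * d + fun ω => d ω ^ 2) := by
      funext ω
      simp only [hGdef, hYdef, hddef, Pi.add_apply, Pi.mul_apply]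
      ring
    calc μ[G (k + 1)|ℱ k]
        =ᵐ[μ] μ[G k|ℱ k] + μ[(fun ω => 2 * Y k ω) * d + fun ω => d ω ^ 2|ℱ k] := by
          rw [hexp]; exact condExp_add (hGint k) (hprodint.add hd2int) _
      _ =ᵐ[μ] G k + (μ[(fun ω => 2 * Y k ω) * d|ℱ k] + μ[fun ω => d ω ^ 2|ℱ k]) := by
          rw [hsq]
          exact Filter.EventuallyEq.add Filter.EventuallyEq.rfl (condExp_add hprodint hd2int _)
      _ =ᵐ[μ] fun ω => G k ω + (μ[fun ω => d ω ^ 2|ℱ k]) ω := by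
          filter_upwards [hpull, hdce] with ω e1 e2
          simp only [Pi.add_apply, Pi.mul_apply] at *
          rw [e1, e2]
          simp
  have hd2nonneg : ∀ k, (0 : Ω → ℝ) ≤ᵐ[μ] μ[fun ω => (M (k + 1) ω - M k ω) ^ 2|ℱ k] :=
    fun k => condExp_nonneg (Filter.Eventually.of_forall fun ω => sq_nonneg _)
  have hGsubm : Submartingale G ℱ μ := by
    refine submartingale_nat (fun k => hGsm k) hGint fun k => ?_
    filter_upwards [hkey k, hd2nonneg k] with ω e1 e2
    rw [e1]
    have e2' : (0 : ℝ) ≤ (μ[fun ω => (M (k + 1) ω - M k ω) ^ 2|ℱ k]) ω := e2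
    linarith
  have hd2le : ∀ k, μ[fun ω => (M (k + 1) ω - M k ω) ^ 2|ℱ k] ≤ᵐ[μ] fun _ => 4 * B₁ ^ 2 := by
    intro k
    have hint : Integrable (fun ω => (M (k + 1) ω - M k ω) ^ 2) μ := by
      refine Integrable.mono' (integrable_const ((2 * B₁) ^ 2)) ?_ ?_
      · have := ((hM.integrable (k+1)).sub (hM.integrable k)).1
        have := this.mul this
        simpa [pow_two, sub_eq_add_neg, Pi.mul_def] using this
      · filter_upwards [hMinc k] with ω hω
        rw [Real.norm_eq_abs, abs_pow]
        exact pow_le_pow_left₀ (abs_nonneg _) hω 2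
    have h1 : (fun ω => (M (k + 1) ω - M k ω) ^ 2) ≤ᵐ[μ] fun _ => 4 * B₁ ^ 2 := by
      filter_upwards [hMinc k] with ω hω
      nlinarith [abs_nonneg (M (k + 1) ω - M k ω), sq_abs (M (k + 1) ω - M k ω)]
    calc μ[fun ω => (M (k + 1) ω - M k ω) ^ 2|ℱ k]
        ≤ᵐ[μ] μ[(fun _ => 4 * B₁ ^ 2)|ℱ k] := condExp_mono hint (integrable_const _) h1
      _ =ᵐ[μ] fun _ => 4 * B₁ ^ 2 := by rw [condExp_const (ℱ.le k)]
  have hEbound : ∀ n : ℕ, ∫ ω, G n ω ∂μ ≤ 4 * B₁ ^ 2 * n := by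
    intro n
    induction n with
    | zero => simp [hGdef]
    | succ n ih =>
      have e1 : ∫ ω, G (n + 1) ω ∂μ = ∫ ω, (μ[G (n + 1)|ℱ n]) ω ∂μ :=
        (integral_condExp (ℱ.le n)).symm
      have e2 : ∫ ω, (μ[G (n + 1)|ℱ n]) ω ∂μ =
          ∫ ω, (G n ω + (μ[fun ω => (M (n + 1) ω - M n ω) ^ 2|ℱ n]) ω) ∂μ :=
        integral_congr_ae (hkey n)
      have e3 : ∫ ω, (G n ω + (μ[fun ω => (M (n + 1) ω - M n ω) ^ 2|ℱ n]) ω) ∂μ =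
          ∫ ω, G n ω ∂μ + ∫ ω, (μ[fun ω => (M (n + 1) ω - M n ω) ^ 2|ℱ n]) ω ∂μ :=
        integral_add (hGint n) integrable_condExp
      have e4 : ∫ ω, (μ[fun ω => (M (n + 1) ω - M n ω) ^ 2|ℱ n]) ω ∂μ ≤ 4 * B₁ ^ 2 := by
        calc ∫ ω, (μ[fun ω => (M (n + 1) ω - M n ω) ^ 2|ℱ n]) ω ∂μ
            ≤ ∫ _ω, (4 * B₁ ^ 2 : ℝ) ∂μ :=
              integral_mono_ae integrable_condExp (integrable_const _) (hd2le n)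
          _ = 4 * B₁ ^ 2 := by simp
      rw [e1, e2, e3]
      push_cast
      linarith
  -- apply Doob's maximal inequality
  set n : ℕ := ⌊h * x ^ 2⌋₊ with hndef
  set ε : ℝ≥0 := Real.toNNReal ((b * x) ^ 2) with hεdef
  have hbx : (0 : ℝ) < (b * x) ^ 2 := by positivity
  have hεcoe : (ε : ℝ) = (b * x) ^ 2 := Real.coe_toNNReal _ hbx.le
  have hGnonneg : (0 : ℕ → Ω → ℝ) ≤ G := fun k ω => sq_nonneg _
  have hmax := maximal_ineq hGsubm hGnonneg (ε := ε) n
  set S : Set Ω := {ω | (ε : ℝ) ≤ (Finset.range (n + 1)).sup' Finset.nonempty_range_add_one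
    fun k => G k ω} with hSdef
  -- the event is a.e. contained in S
  have hA : ∀ᵐ ω ∂μ, ∀ k, 0 ≤ predictablePart X ℱ μ k ω := by
    rw [ae_all_iff]
    intro k
    have h1 : ∀ i : ℕ, (0 : Ω → ℝ) ≤ᵐ[μ] μ[X (i + 1) - X i|ℱ i] := fun i =>
      hsub.condExp_sub_nonneg (Nat.le_succ i)
    filter_upwards [ae_all_iff.2 h1] with ω hω
    simp only [predictablePart, Finset.sum_apply]
    exact Finset.sum_nonneg fun i _ => hω i
  have hincl : μ {ω | ∃ t : ℕ, (t : ℝ) ≤ h * x ^ 2 ∧ X t ω < X 0 ω - b * x} ≤ μ S := by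
    apply measure_mono_ae
    filter_upwards [hA] with ω hω hmem
    obtain ⟨t, ht, hlt⟩ := hmem
    have htn : t ≤ n := Nat.le_floor ht
    have hXeq : X t ω = M t ω + predictablePart X ℱ μ t ω := by
      have := congrFun (congrFun (martingalePart_add_predictablePart ℱ μ X) t) ω
      simpa [hMdef] using this.symm
    have hX0 : X 0 ω = M 0 ω := by rw [← hM0]
    have hYlt : M t ω - M 0 ω < -(b * x) := by
      have := hω t
      rw [hXeq, hX0] at hlt
      linarith
    have hGt : (ε : ℝ) ≤ G t ω := by
      rw [hεcoe]
      show (b * x) ^ 2 ≤ (M t ω - M 0 ω) ^ 2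
      nlinarith [mul_pos hb hx, sq_nonneg (M t ω - M 0 ω + b * x)]
    have : (ε : ℝ) ≤ (Finset.range (n + 1)).sup' Finset.nonempty_range_add_one fun k => G k ω :=
      le_trans hGt (Finset.le_sup' (fun k => G k ω) (Finset.mem_range.2 (Nat.lt_succ_of_le htn)))
    exact this
  -- conclude
  have hsetint : ∫ ω in S, G n ω ∂μ ≤ 4 * B₁ ^ 2 * n := by
    calc ∫ ω in S, G n ω ∂μ ≤ ∫ ω, G n ω ∂μ :=
          setIntegral_le_integral (hGint n) (Filter.Eventually.of_forall fun ω => sq_nonneg _)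
      _ ≤ 4 * B₁ ^ 2 * n := hEbound n
  have hεne : (ε : ℝ≥0∞) ≠ 0 := by
    simp only [ne_eq, ENNReal.coe_eq_zero, hεdef, Real.toNNReal_eq_zero, not_le]
    exact hbx
  have hchain : (ε : ℝ≥0∞) * μ S ≤ (ε : ℝ≥0∞) * ENNReal.ofReal (4 * h * B₁ ^ 2 / b ^ 2) := by
    calc (ε : ℝ≥0∞) * μ S = ε • μ S := rfl
      _ ≤ ENNReal.ofReal (∫ ω in S, G n ω ∂μ) := hmax
      _ ≤ ENNReal.ofReal (4 * B₁ ^ 2 * n) := ENNReal.ofReal_le_ofReal hsetint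
      _ ≤ ENNReal.ofReal ((b * x) ^ 2 * (4 * h * B₁ ^ 2 / b ^ 2)) := by
          apply ENNReal.ofReal_le_ofReal
          have hn : (n : ℝ) ≤ h * x ^ 2 := Nat.floor_le (by positivity)
          have : (b * x) ^ 2 * (4 * h * B₁ ^ 2 / b ^ 2) = 4 * B₁ ^ 2 * (h * x ^ 2) := by
            field_simp
          rw [this]
          nlinarith
      _ = (ε : ℝ≥0∞) * ENNReal.ofReal (4 * h * B₁ ^ 2 / b ^ 2) := by
          rw [ENNReal.ofReal_mul (sq_nonneg _)]
          rfl
  calc μ {ω | ∃ t : ℕ, (t : ℝ) ≤ h * x ^ 2 ∧ X t ω < X 0 ω - b * x} ≤ μ S := hincl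
    _ ≤ ENNReal.ofReal (4 * h * B₁ ^ 2 / b ^ 2) :=
        (ENNReal.mul_le_mul_iff_right hεne ENNReal.coe_ne_top).1 hchain
end

section
/- Let (Xₜ) be a Markov process on [0,∞) with jumps Dₜ = Xₜ - Xₜ₋₁ satisfying |Dₜ| ≤ B₁ and E[Dₜ² | 𝓕ₜ₋₁] ≥ B₂ > 0 whenever Xₜ₋₁ ≥ a. Fix c > 0, γ ∈ (0,1), and n large. Suppose X₀ ∈ (a, γn] and E[Dₜ | 𝓕ₜ₋₁] ≤ c/n on the event {a ≤ Xₜ₋₁ ≤ n}. Let τ = inf{t : Xₜ < a or Xₜ > n}. Then τ < ∞ almost surely and P(X_τ < a) ≥ ν for some ν = ν(γ, c, B₂) > 0 not depending on n. -/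
open MeasureTheory Filter

lemma quad_exp {x : ℝ} (hx : x ≤ 2) : 1 - x + x^2/4 ≤ Real.exp (-x) := by
  have h := Real.add_one_le_exp (-x/2)
  have h2 : Real.exp (-x/2) * Real.exp (-x/2) = Real.exp (-x) := by
    rw [← Real.exp_add]; ring_nf
  nlinarith [Real.exp_pos (-x/2)]

lemma inf_self {F : Set ℕ} {t : ℕ} (h : ∀ s < t, s ∉ F) : sInf (F ∪ {t}) = t := by
  apply le_antisymm
  · exact Nat.sInf_le (Set.mem_union_right _ rfl)
  · refine le_csInf ⟨t, Set.mem_union_right _ rfl⟩ ?_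
    rintro b (hb | hb)
    · by_contra hlt
      exact h b (lt_of_not_ge hlt) hb
    · exact le_of_eq (Set.eq_of_mem_singleton hb).symm

lemma inf_frozen {F : Set ℕ} {t t' : ℕ} (h : ∃ s, s ∈ F ∧ s ≤ t) (htt : t ≤ t') :
    sInf (F ∪ {t'}) = sInf F := by
  obtain ⟨s, hs, hst⟩ := h
  apply le_antisymm
  · exact csInf_le_csInf (OrderBot.bddBelow _) ⟨s, hs⟩ Set.subset_union_left
  · refine le_csInf ⟨t', Set.mem_union_right _ rfl⟩ ?_
    rintro b (hb | hb)
    · exact Nat.sInf_le hb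
    · rw [Set.eq_of_mem_singleton hb]
      exact le_trans (Nat.sInf_le hs) (le_trans hst htt)

set_option maxHeartbeats 1000000 in
/-- Lemma 3 of the paper: for a process on `[0,∞)` with bounded jumps, uniformly
non-degenerate conditional variance, started in `(a, γn]` and with drift at most `c/n`
on `[a,n]`, the exit time `τ` of `[a,n]` is a.s. finite and the exit is through the
bottom with probability at least `ν = ν(γ, c, B₂) > 0`, uniformly in (large) `n`. -/
theorem stmt_8 {Ω : Type*} {m0 : MeasurableSpace Ω} (μ : Measure Ω) [IsProbabilityMeasure μ]
    (a c B₁ B₂ γ : ℝ) (ha : 0 < a) (hc : 0 < c) (hB₁ : 0 < B₁) (hB₂ : 0 < B₂)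
    (hγ : γ ∈ Set.Ioo (0 : ℝ) 1) :
    ∃ ν > (0 : ℝ), ∃ n₀ : ℝ, ∀ n : ℝ, n₀ ≤ n →
      ∀ (ℱ : Filtration ℕ m0) (X : ℕ → Ω → ℝ),
        Adapted ℱ X →
        (∀ t ω, 0 ≤ X t ω) →
        (∀ t : ℕ, ∀ᵐ ω ∂μ, |X (t + 1) ω - X t ω| ≤ B₁) →
        (∀ t : ℕ, ∀ᵐ ω ∂μ, a ≤ X t ω →
          B₂ ≤ (μ[(fun ω' => (X (t + 1) ω' - X t ω') ^ 2)|ℱ t]) ω) →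
        (∀ ω, a < X 0 ω ∧ X 0 ω ≤ γ * n) →
        (∀ t : ℕ, ∀ᵐ ω ∂μ, a ≤ X t ω ∧ X t ω ≤ n →
          (μ[(fun ω' => X (t + 1) ω' - X t ω')|ℱ t]) ω ≤ c / n) →
        (∀ᵐ ω ∂μ, ∃ t : ℕ, X t ω < a ∨ n < X t ω) ∧
        ENNReal.ofReal ν ≤ μ {ω | X (sInf {t : ℕ | X t ω < a ∨ n < X t ω}) ω < a} := by
  obtain ⟨hγ0, hγ1⟩ := hγ
  set β : ℝ := 8 * c / B₂ with hβ_def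
  have hβ : 0 < β := by positivity
  refine ⟨Real.exp (-(β * γ)) - Real.exp (-β), ?_, max 1 (β * B₁ / 2), ?_⟩
  · have h1 : β * γ < β := by nlinarith
    have := Real.exp_lt_exp.2 (neg_lt_neg h1)
    linarith
  intro n hn ℱ X hadp hpos hjump hvar hinit hdrift
  have hn1 : (1:ℝ) ≤ n := le_trans (le_max_left _ _) hn
  have hn0 : (0:ℝ) < n := by linarith
  have hnB : β * B₁ / 2 ≤ n := le_trans (le_max_right _ _) hn
  set lam : ℝ := β / n with hlam_def
  have hlam0 : 0 < lam := by positivity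
  have hlamn : lam * n = β := div_mul_cancel₀ β hn0.ne'
  have hlamB₁ : lam * B₁ ≤ 2 := by
    rw [hlam_def, div_mul_eq_mul_div, div_le_iff₀ hn0]; linarith
  -- basic objects
  set S : ℕ → Ω → ℝ := fun t ω => Real.exp (-(lam * X t ω)) with hS_def
  set E : Ω → Set ℕ := fun ω => {t | X t ω < a ∨ n < X t ω} with hE_def
  set T : Ω → ℕ := fun ω => sInf (E ω) with hT_def
  set N : ℕ → Ω → ℕ := fun t ω => sInf (E ω ∪ {t}) with hN_def
  set A : ℕ → Set Ω := fun t => {ω | ∀ s ≤ t, a ≤ X s ω ∧ X s ω ≤ n} with hA_def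
  -- measurability of X and S
  have hXm : ∀ t, Measurable (X t) := fun t => (hadp t).mono (ℱ.le t) le_rfl
  have hXmF : ∀ t, Measurable[ℱ t] (X t) := fun t => (hadp t)
  have hSm : ∀ t, Measurable (S t) := fun t => (Real.measurable_exp.comp ((hXm t).const_mul lam).neg)
  have hSmF : ∀ t, Measurable[ℱ t] (S t) := fun t =>
    (Real.measurable_exp.comp ((hXmF t).const_mul lam).neg)
  have hS0 : ∀ t ω, 0 < S t ω := fun t ω => Real.exp_pos _
  have hS1 : ∀ t ω, S t ω ≤ 1 := by
    intro t ω
    refine Real.exp_le_one_iff.mpr ?_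
    simp only [neg_nonpos]
    exact mul_nonneg hlam0.le (hpos t ω)
  -- membership in A and E
  have hAE : ∀ t ω, ω ∈ A t ↔ ∀ s ≤ t, s ∉ E ω := by
    intro t ω
    simp only [hA_def, hE_def, Set.mem_setOf_eq]
    constructor
    · intro h s hs hmem
      rcases hmem with h1 | h1
      · exact absurd h1 (not_lt.2 (h s hs).1)
      · exact absurd h1 (not_lt.2 (h s hs).2)
    · intro h s hs
      have := h s hs
      push_neg at this
      exact this
  have hnA : ∀ t ω, ω ∉ A t → ∃ s, s ∈ E ω ∧ s ≤ t := by
    intro t ω h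
    by_contra hcon
    push_neg at hcon
    exact h ((hAE t ω).2 fun s hs hmem => absurd (hcon s hmem) (not_lt.2 hs))
  have hN_self : ∀ t ω, ω ∈ A t → N t ω = t := by
    intro t ω h
    exact inf_self fun s hs => (hAE t ω).1 h s hs.le
  have hN_succ : ∀ t ω, ω ∈ A t → N (t+1) ω = t + 1 := by
    intro t ω h
    exact inf_self fun s hs => (hAE t ω).1 h s (Nat.lt_succ_iff.mp hs)
  have hN_frozen : ∀ (t t' : ℕ) ω, (∃ s, s ∈ E ω ∧ s ≤ t) → t ≤ t' → N t' ω = T ω := by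
    intro t t' ω h htt
    exact inf_frozen h htt
  -- the stopped exponential process, defined recursively
  set Z : ℕ → Ω → ℝ := fun t => Nat.rec (S 0)
    (fun t Zt ω => Zt ω + (A t).indicator (fun ω' => S (t+1) ω' - S t ω') ω) t with hZ_def
  have hZ0 : Z 0 = S 0 := rfl
  have hZsucc : ∀ t, Z (t+1) =
      fun ω => Z t ω + (A t).indicator (fun ω' => S (t+1) ω' - S t ω') ω := fun t => rfl
  have hZ_closed : ∀ t ω, Z t ω = S (N t ω) ω := by
    intro t
    induction t with
    | zero =>
      intro ω
      have h0 : N 0 ω = 0 := Nat.le_zero.mp (Nat.sInf_le (Set.mem_union_right _ rfl))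
      rw [hZ0, h0]
    | succ t ih =>
      intro ω
      by_cases hA' : ω ∈ A t
      · rw [hZsucc, hN_succ t ω hA']
        simp only [Set.indicator_of_mem hA', ih ω, hN_self t ω hA']
        ring
      · obtain ⟨s, hsE, hst⟩ := hnA t ω hA'
        rw [hZsucc]
        simp only [Set.indicator_of_notMem hA', ih ω, add_zero]
        rw [hN_frozen t (t+1) ω ⟨s, hsE, hst⟩ (Nat.le_succ t), hN_frozen t t ω ⟨s, hsE, hst⟩ le_rfl]
  have hZ_pos : ∀ t ω, 0 < Z t ω := fun t ω => (hZ_closed t ω) ▸ hS0 _ ω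
  have hZ_le1 : ∀ t ω, Z t ω ≤ 1 := fun t ω => (hZ_closed t ω) ▸ hS1 _ ω
  -- measurability of A
  have hA_eq : ∀ t, A t = ⋂ (s : ℕ), ⋂ (_ : s ≤ t), X s ⁻¹' Set.Icc a n := by
    intro t
    ext ω
    simp [hA_def, Set.mem_iInter, Set.mem_Icc]
  have hA_measF : ∀ t, MeasurableSet[ℱ t] (A t) := by
    intro t
    rw [hA_eq]
    exact MeasurableSet.iInter fun s => MeasurableSet.iInter fun hs =>
      ((hXmF s).mono (ℱ.mono hs) le_rfl) measurableSet_Icc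
  have hA_meas : ∀ t, MeasurableSet (A t) := fun t => ℱ.le t _ (hA_measF t)
  -- integrability helpers
  have hbint : ∀ (f : Ω → ℝ) (C : ℝ), AEStronglyMeasurable f μ → (∀ᵐ ω ∂μ, |f ω| ≤ C) →
      Integrable f μ := fun f C hm hC =>
    ⟨hm, HasFiniteIntegral.of_bounded (C := C) (by simpa [Real.norm_eq_abs] using hC)⟩
  have hSint : ∀ t, Integrable (S t) μ := fun t =>
    hbint _ 1 (hSm t).aestronglyMeasurable
      (ae_of_all _ fun ω => abs_le.2 ⟨by nlinarith [hS0 t ω], hS1 t ω⟩)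
  have hIndint : ∀ t, Integrable ((A t).indicator (fun ω' => S (t+1) ω' - S t ω')) μ :=
    fun t => ((hSint (t+1)).sub (hSint t)).indicator (hA_meas t)
  have hZm : ∀ t, Measurable (Z t) := by
    intro t
    induction t with
    | zero => exact hSm 0
    | succ t ih =>
      rw [hZsucc]
      exact ih.add (((hSm (t+1)).sub (hSm t)).indicator (hA_meas t))
  have hZint : ∀ t, Integrable (Z t) μ := fun t =>
    hbint _ 1 (hZm t).aestronglyMeasurable
      (ae_of_all _ fun ω => abs_le.2 ⟨by nlinarith [hZ_pos t ω], hZ_le1 t ω⟩)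
  
  -- the key one-step estimate
  have key : ∀ t : ℕ, Real.exp (-β) * ((β * c / n^2) * (μ (A t)).toReal) ≤
      ∫ ω, (A t).indicator (fun ω' => S (t+1) ω' - S t ω') ω ∂μ := by
    intro t
    haveI : SigmaFinite (μ.trim (ℱ.le t)) := inferInstance
    set D : Ω → ℝ := fun ω' => X (t+1) ω' - X t ω' with hD_def
    set g : Ω → ℝ := (A t).indicator (S t) with hg_def
    have hDm : Measurable D := (hXm (t+1)).sub (hXm t)
    have hgmF : Measurable[ℱ t] g := (hSmF t).indicator (hA_measF t)
    have hgm : Measurable g := (hSm t).indicator (hA_meas t)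
    have hg0 : ∀ ω, 0 ≤ g ω := fun ω => Set.indicator_nonneg (fun ω' _ => (hS0 t ω').le) ω
    have hg1 : ∀ ω, g ω ≤ 1 := by
      intro ω
      by_cases h : ω ∈ A t
      · rw [hg_def, Set.indicator_of_mem h]; exact hS1 t ω
      · rw [hg_def, Set.indicator_of_notMem h]; norm_num
    have hgbd : ∃ C, ∀ ω, ‖g ω‖ ≤ C :=
      ⟨1, fun ω => by rw [Real.norm_eq_abs, abs_of_nonneg (hg0 ω)]; exact hg1 ω⟩
    have hgbd' : ∀ᵐ ω ∂μ, ‖g ω‖ ≤ 1 :=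
      ae_of_all _ fun ω => by rw [Real.norm_eq_abs, abs_of_nonneg (hg0 ω)]; exact hg1 ω
    have hgint : Integrable g μ := (hSint t).indicator (hA_meas t)
    have hDint : Integrable D μ := hbint _ B₁ hDm.aestronglyMeasurable (hjump t)
    have hD2int : Integrable (fun ω' => D ω' ^ 2) μ := by
      refine hbint _ (B₁^2) ((hDm.pow_const 2).aestronglyMeasurable) ?_
      filter_upwards [hjump t] with ω hj
      rw [abs_of_nonneg (sq_nonneg _)]
      calc D ω ^ 2 = |D ω| ^ 2 := (sq_abs _).symm
        _ ≤ B₁ ^ 2 := by nlinarith [abs_nonneg (D ω)]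
    have hgDint : Integrable (g * D) μ := hDint.bdd_mul hgm.aestronglyMeasurable hgbd'
    have hgD2int : Integrable (g * fun ω' => D ω' ^ 2) μ :=
      hD2int.bdd_mul hgm.aestronglyMeasurable hgbd'
    -- conditional expectation identities
    have e1 : ∫ ω, g ω * D ω ∂μ = ∫ ω, g ω * (μ[D|ℱ t]) ω ∂μ := by
      have hmul := condExp_mul_of_stronglyMeasurable_left (μ := μ) hgmF.stronglyMeasurable hgDint hDint
      calc ∫ ω, g ω * D ω ∂μ = ∫ ω, (μ[g * D|ℱ t]) ω ∂μ := (integral_condExp (ℱ.le t)).symm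
        _ = ∫ ω, (g * (μ[D|ℱ t])) ω ∂μ := integral_congr_ae hmul
        _ = ∫ ω, g ω * (μ[D|ℱ t]) ω ∂μ := rfl
    have e2 : ∫ ω, g ω * D ω ^ 2 ∂μ =
        ∫ ω, g ω * (μ[(fun ω' => D ω' ^ 2)|ℱ t]) ω ∂μ := by
      have hmul := condExp_mul_of_stronglyMeasurable_left (μ := μ) hgmF.stronglyMeasurable hgD2int hD2int
      calc ∫ ω, g ω * D ω ^ 2 ∂μ = ∫ ω, (μ[g * fun ω' => D ω' ^ 2|ℱ t]) ω ∂μ :=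
            (integral_condExp (ℱ.le t)).symm
        _ = ∫ ω, (g * (μ[(fun ω' => D ω' ^ 2)|ℱ t])) ω ∂μ := integral_congr_ae hmul
        _ = _ := rfl
    -- conditional bounds integrated
    have hcondint : Integrable (fun ω => g ω * (μ[D|ℱ t]) ω) μ :=
      (integrable_condExp).bdd_mul hgm.aestronglyMeasurable hgbd'
    have hcond2int : Integrable (fun ω => g ω * (μ[(fun ω' => D ω' ^ 2)|ℱ t]) ω) μ :=
      (integrable_condExp).bdd_mul hgm.aestronglyMeasurable hgbd'
    have b1 : ∫ ω, g ω * D ω ∂μ ≤ (c/n) * ∫ ω, g ω ∂μ := by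
      rw [e1]
      have hae : ∀ᵐ ω ∂μ, g ω * (μ[D|ℱ t]) ω ≤ (c/n) * g ω := by
        filter_upwards [hdrift t] with ω hω
        by_cases hA' : ω ∈ A t
        · have h' := hω (hA' t le_rfl)
          calc g ω * (μ[D|ℱ t]) ω ≤ g ω * (c/n) := mul_le_mul_of_nonneg_left h' (hg0 ω)
            _ = (c/n) * g ω := mul_comm _ _
        · rw [hg_def, Set.indicator_of_notMem hA']; norm_num
      calc ∫ ω, g ω * (μ[D|ℱ t]) ω ∂μ ≤ ∫ ω, (c/n) * g ω ∂μ :=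
            integral_mono_ae hcondint (hgint.const_mul _) hae
        _ = (c/n) * ∫ ω, g ω ∂μ := integral_const_mul _ _
    have b2 : B₂ * ∫ ω, g ω ∂μ ≤ ∫ ω, g ω * D ω ^ 2 ∂μ := by
      rw [e2]
      have hae : ∀ᵐ ω ∂μ, B₂ * g ω ≤ g ω * (μ[(fun ω' => D ω' ^ 2)|ℱ t]) ω := by
        filter_upwards [hvar t] with ω hω
        by_cases hA' : ω ∈ A t
        · have h' := hω (hA' t le_rfl).1
          calc B₂ * g ω = g ω * B₂ := mul_comm _ _
            _ ≤ g ω * (μ[(fun ω' => D ω' ^ 2)|ℱ t]) ω := mul_le_mul_of_nonneg_left h' (hg0 ω)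
        · rw [hg_def, Set.indicator_of_notMem hA']; norm_num
      calc B₂ * ∫ ω, g ω ∂μ = ∫ ω, B₂ * g ω ∂μ := (integral_const_mul _ _).symm
        _ ≤ _ := integral_mono_ae (hgint.const_mul _) hcond2int hae
    -- the indicator increment identity
    have hId : ∀ ω, (A t).indicator (fun ω' => S (t+1) ω' - S t ω') ω =
        g ω * (Real.exp (-(lam * D ω)) - 1) := by
      intro ω
      by_cases hA' : ω ∈ A t
      · rw [Set.indicator_of_mem hA', hg_def, Set.indicator_of_mem hA']
        have hexp : S (t+1) ω = S t ω * Real.exp (-(lam * D ω)) := by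
          rw [hS_def]
          dsimp only
          rw [← Real.exp_add]
          congr 1
          rw [hD_def]
          ring
        rw [hexp]
        ring
      · rw [Set.indicator_of_notMem hA', hg_def, Set.indicator_of_notMem hA']
        ring
    -- pointwise quadratic lower bound
    have hquad : ∀ᵐ ω ∂μ, g ω * (lam^2/4 * D ω ^ 2 - lam * D ω) ≤
        g ω * (Real.exp (-(lam * D ω)) - 1) := by
      filter_upwards [hjump t] with ω hj
      have hx2 : lam * D ω ≤ 2 :=
        le_trans (le_trans (le_abs_self _) (by
          rw [abs_mul, abs_of_pos hlam0]
          exact mul_le_mul_of_nonneg_left hj hlam0.le)) hlamB₁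
      have hq := quad_exp hx2
      have : lam^2/4 * D ω ^ 2 - lam * D ω ≤ Real.exp (-(lam * D ω)) - 1 := by nlinarith
      exact mul_le_mul_of_nonneg_left this (hg0 ω)
    -- integrability of quadratic integrand
    have hquadint : Integrable (fun ω => g ω * (lam^2/4 * D ω ^ 2 - lam * D ω)) μ := by
      have : (fun ω => g ω * (lam^2/4 * D ω ^ 2 - lam * D ω)) =
          fun ω => lam^2/4 * (g ω * D ω ^ 2) - lam * (g ω * D ω) := by
        funext ω; ring
      rw [this]
      exact (hgD2int.const_mul _).sub (hgDint.const_mul _)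
    -- lower bound for ∫ g
    have hgl : Real.exp (-β) * (μ (A t)).toReal ≤ ∫ ω, g ω ∂μ := by
      have hpt : ∀ ω, (A t).indicator (fun _ => Real.exp (-β)) ω ≤ g ω := by
        intro ω
        by_cases hA' : ω ∈ A t
        · rw [Set.indicator_of_mem hA', hg_def, Set.indicator_of_mem hA']
          apply Real.exp_le_exp.2
          have hXn : X t ω ≤ n := (hA' t le_rfl).2
          have : lam * X t ω ≤ β := hlamn ▸ mul_le_mul_of_nonneg_left hXn hlam0.le
          linarith
        · rw [Set.indicator_of_notMem hA', hg_def, Set.indicator_of_notMem hA']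
      have hii : Integrable ((A t).indicator (fun _ => Real.exp (-β))) μ :=
        (integrable_const _).indicator (hA_meas t)
      calc Real.exp (-β) * (μ (A t)).toReal
          = ∫ ω, (A t).indicator (fun _ => Real.exp (-β)) ω ∂μ := by
            rw [integral_indicator_const _ (hA_meas t)]
            simp [mul_comm]; rfl
        _ ≤ ∫ ω, g ω ∂μ := integral_mono hii hgint hpt
    have hgnn : 0 ≤ ∫ ω, g ω ∂μ := integral_nonneg hg0
    -- the coefficient identity
    have hco : lam^2/4 * B₂ - lam * (c/n) = β * c / n^2 := by
      rw [hlam_def, hβ_def]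
      field_simp
      ring
    -- assemble
    have main : (β * c / n^2) * ∫ ω, g ω ∂μ ≤
        ∫ ω, (A t).indicator (fun ω' => S (t+1) ω' - S t ω') ω ∂μ := by
      have step0 : ∫ ω, (A t).indicator (fun ω' => S (t+1) ω' - S t ω') ω ∂μ =
          ∫ ω, g ω * (Real.exp (-(lam * D ω)) - 1) ∂μ :=
        integral_congr_ae (ae_of_all _ hId)
      have hexpint : Integrable (fun ω => g ω * (Real.exp (-(lam * D ω)) - 1)) μ := by
        rw [← funext hId]
        exact hIndint t
      have step1 : ∫ ω, g ω * (lam^2/4 * D ω ^ 2 - lam * D ω) ∂μ ≤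
          ∫ ω, g ω * (Real.exp (-(lam * D ω)) - 1) ∂μ :=
        integral_mono_ae hquadint hexpint hquad
      have step2 : ∫ ω, g ω * (lam^2/4 * D ω ^ 2 - lam * D ω) ∂μ =
          lam^2/4 * (∫ ω, g ω * D ω ^ 2 ∂μ) - lam * ∫ ω, g ω * D ω ∂μ := by
        have hrw : (fun ω => g ω * (lam^2/4 * D ω ^ 2 - lam * D ω)) =
            fun ω => lam^2/4 * (g ω * D ω ^ 2) - lam * (g ω * D ω) := by
          funext ω; ring
        have h1 : Integrable (fun ω => lam^2/4 * (g ω * D ω ^ 2)) μ := hgD2int.const_mul _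
        have h2 : Integrable (fun ω => lam * (g ω * D ω)) μ := hgDint.const_mul _
        rw [hrw, integral_sub h1 h2, integral_const_mul, integral_const_mul]
      have step3 : (β * c / n^2) * ∫ ω, g ω ∂μ ≤
          lam^2/4 * (∫ ω, g ω * D ω ^ 2 ∂μ) - lam * ∫ ω, g ω * D ω ∂μ := by
        have t1 : lam^2/4 * (B₂ * ∫ ω, g ω ∂μ) ≤ lam^2/4 * ∫ ω, g ω * D ω ^ 2 ∂μ :=
          mul_le_mul_of_nonneg_left b2 (by positivity)
        have t2 : lam * ∫ ω, g ω * D ω ∂μ ≤ lam * ((c/n) * ∫ ω, g ω ∂μ) :=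
          mul_le_mul_of_nonneg_left b1 hlam0.le
        have t3 : lam^2/4 * (B₂ * ∫ ω, g ω ∂μ) - lam * ((c/n) * ∫ ω, g ω ∂μ) =
            (β * c / n^2) * ∫ ω, g ω ∂μ := by rw [← hco]; ring
        linarith
      rw [step0]
      linarith
    calc Real.exp (-β) * ((β * c / n^2) * (μ (A t)).toReal)
        = (β * c / n^2) * (Real.exp (-β) * (μ (A t)).toReal) := by ring
      _ ≤ (β * c / n^2) * ∫ ω, g ω ∂μ := by
          apply mul_le_mul_of_nonneg_left hgl
          positivity
      _ ≤ _ := main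

  
  -- expectation recursion
  have hzrec : ∀ t, ∫ ω, Z (t+1) ω ∂μ =
      (∫ ω, Z t ω ∂μ) + ∫ ω, (A t).indicator (fun ω' => S (t+1) ω' - S t ω') ω ∂μ := by
    intro t
    calc ∫ ω, Z (t+1) ω ∂μ
        = ∫ ω, (Z t ω + (A t).indicator (fun ω' => S (t+1) ω' - S t ω') ω) ∂μ :=
          integral_congr_ae (ae_of_all _ fun ω => congrFun (hZsucc t) ω)
      _ = _ := integral_add (hZint t) (hIndint t)
  set eps : ℝ := Real.exp (-β) * (β * c / n^2) with heps_def
  have heps0 : 0 < eps := by positivity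
  have key' : ∀ t, eps * (μ (A t)).toReal ≤
      ∫ ω, (A t).indicator (fun ω' => S (t+1) ω' - S t ω') ω ∂μ := by
    intro t
    have := key t
    rw [heps_def, mul_assoc]
    exact this
  have hz0low : Real.exp (-(β*γ)) ≤ ∫ ω, Z 0 ω ∂μ := by
    have hpt : ∀ ω, Real.exp (-(β*γ)) ≤ Z 0 ω := by
      intro ω
      rw [hZ0]
      apply Real.exp_le_exp.2
      have hX0 : X 0 ω ≤ γ * n := (hinit ω).2
      have : lam * X 0 ω ≤ lam * (γ * n) := mul_le_mul_of_nonneg_left hX0 hlam0.le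
      have h2 : lam * (γ * n) = β * γ := by rw [← hlamn]; ring
      linarith
    calc Real.exp (-(β*γ)) = ∫ _ω, Real.exp (-(β*γ)) ∂μ := by simp
      _ ≤ ∫ ω, Z 0 ω ∂μ := integral_mono (integrable_const _) (hZint 0) hpt
  have hz_up : ∀ t, ∫ ω, Z t ω ∂μ ≤ 1 := by
    intro t
    calc ∫ ω, Z t ω ∂μ ≤ ∫ _ω, (1:ℝ) ∂μ := integral_mono (hZint t) (integrable_const _) (hZ_le1 t)
      _ = 1 := by simp
  -- antitonicity of A
  have hA_anti : ∀ s t : ℕ, s ≤ t → A t ⊆ A s := fun s t hst ω hω u hu => hω u (hu.trans hst)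
  set mA : ℕ → ℝ := fun t => (μ (A t)).toReal with hmA_def
  have hmA_nn : ∀ t, 0 ≤ mA t := fun t => ENNReal.toReal_nonneg
  have hmA_anti : ∀ s t : ℕ, s ≤ t → mA t ≤ mA s := fun s t hst =>
    ENNReal.toReal_mono (measure_ne_top μ _) (measure_mono (hA_anti s t hst))
  have hsum : ∀ t : ℕ, (∫ ω, Z 0 ω ∂μ) + eps * ((t:ℝ) * mA t) ≤ ∫ ω, Z t ω ∂μ := by
    intro t
    induction t with
    | zero => simp
    | succ t ih =>
      have h1 := key' t
      have h2 := hzrec t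
      have h3 : mA (t+1) ≤ mA t := hmA_anti t (t+1) (Nat.le_succ t)
      have h4 : (t:ℝ) * mA (t+1) ≤ (t:ℝ) * mA t :=
        mul_le_mul_of_nonneg_left h3 (Nat.cast_nonneg t)
      have h5 : ((t+1 : ℕ):ℝ) = (t:ℝ) + 1 := by exact_mod_cast Nat.cast_succ t
      have h6 : eps * (((t+1 : ℕ):ℝ) * mA (t+1)) ≤ eps * ((t:ℝ) * mA t) + eps * mA (t+1) := by
        rw [h5, add_mul, one_mul, mul_add]
        have h61 : eps * ((t:ℝ) * mA (t+1)) ≤ eps * ((t:ℝ) * mA t) :=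
          mul_le_mul_of_nonneg_left h4 heps0.le
        linarith
      have h7 : eps * mA (t+1) ≤ eps * mA t := mul_le_mul_of_nonneg_left h3 heps0.le
      linarith
  have hInter : μ (⋂ t, A t) = 0 := by
    have hm_le : ∀ t, (μ (⋂ t, A t)).toReal ≤ mA t := fun t =>
      ENNReal.toReal_mono (measure_ne_top μ _) (measure_mono (Set.iInter_subset _ t))
    have hbound : ∀ t : ℕ, eps * ((t:ℝ) * (μ (⋂ t, A t)).toReal) ≤ 1 := by
      intro t
      have h1 := hsum t
      have h2 := hz_up t
      have h3 : eps * ((t:ℝ) * (μ (⋂ t, A t)).toReal) ≤ eps * ((t:ℝ) * mA t) :=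
        mul_le_mul_of_nonneg_left
          (mul_le_mul_of_nonneg_left (hm_le t) (Nat.cast_nonneg t)) heps0.le
      have h4 : (0:ℝ) < Real.exp (-(β*γ)) := Real.exp_pos _
      linarith
    have hz : (μ (⋂ t, A t)).toReal = 0 := by
      by_contra hne
      have hpos : 0 < (μ (⋂ t, A t)).toReal :=
        lt_of_le_of_ne ENNReal.toReal_nonneg (Ne.symm hne)
      obtain ⟨t, ht⟩ := exists_nat_gt (1 / (eps * (μ (⋂ t, A t)).toReal))
      have := hbound t
      have hem : 0 < eps * (μ (⋂ t, A t)).toReal := mul_pos heps0 hpos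
      rw [div_lt_iff₀ hem] at ht
      have hρ : (t:ℝ) * (eps * (μ (⋂ t, A t)).toReal) = eps * ((t:ℝ) * (μ (⋂ t, A t)).toReal) := by
        ring
      linarith
    rcases (ENNReal.toReal_eq_zero_iff _).1 hz with h | h
    · exact h
    · exact absurd h (measure_ne_top μ _)
  have hconc1 : ∀ᵐ ω ∂μ, ∃ t : ℕ, X t ω < a ∨ n < X t ω := by
    rw [ae_iff]
    refine measure_mono_null ?_ hInter
    intro ω hω
    simp only [Set.mem_setOf_eq, not_exists, not_or, not_lt] at hω
    exact Set.mem_iInter.2 fun t s hs => ⟨(hω s).1, (hω s).2⟩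
  have hae_ne : ∀ᵐ ω ∂μ, (E ω).Nonempty := hconc1.mono fun ω h => h
  -- convergence of Z to the stopped value
  set W : Ω → ℝ := fun ω => S (T ω) ω with hW_def
  have htend : ∀ᵐ ω ∂μ, Tendsto (fun t => Z t ω) atTop (nhds (W ω)) := by
    filter_upwards [hae_ne] with ω hne
    have hev : ∀ᶠ t in atTop, Z t ω = W ω := by
      filter_upwards [eventually_ge_atTop (T ω)] with t ht
      rw [hZ_closed t ω, hN_frozen (T ω) t ω ⟨T ω, Nat.sInf_mem hne, le_rfl⟩ ht]
    exact tendsto_const_nhds.congr' (hev.mono fun t h => h.symm)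
  have hWint_lim : Tendsto (fun t => ∫ ω, Z t ω ∂μ) atTop (nhds (∫ ω, W ω ∂μ)) := by
    refine tendsto_integral_of_dominated_convergence (fun _ => (1:ℝ))
      (fun t => (hZm t).aestronglyMeasurable) (integrable_const _) (fun t => ?_) htend
    exact ae_of_all _ fun ω => by
      rw [Real.norm_eq_abs, abs_of_pos (hZ_pos t ω)]
      exact hZ_le1 t ω
  have hz_low : ∀ t, Real.exp (-(β*γ)) ≤ ∫ ω, Z t ω ∂μ := by
    intro t
    have h1 := hsum t
    have h2 : 0 ≤ eps * ((t:ℝ) * mA t) :=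
      mul_nonneg heps0.le (mul_nonneg (Nat.cast_nonneg t) (hmA_nn t))
    linarith
  have hW_low : Real.exp (-(β*γ)) ≤ ∫ ω, W ω ∂μ :=
    ge_of_tendsto hWint_lim (Eventually.of_forall hz_low)
  -- measurability of T and the bottom-exit event
  have hEmeas : ∀ s : ℕ, MeasurableSet {ω | s ∈ E ω} := by
    intro s
    have : {ω | s ∈ E ω} = X s ⁻¹' Set.Iio a ∪ X s ⁻¹' Set.Ioi n := by
      ext ω; rfl
    rw [this]
    exact ((hXm s) measurableSet_Iio).union ((hXm s) measurableSet_Ioi)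
  have hTle : ∀ t, MeasurableSet {ω | T ω ≤ t} := by
    intro t
    have heq : {ω | T ω ≤ t} =
        (⋃ s, ⋃ (_ : s ≤ t), {ω | s ∈ E ω}) ∪ ⋂ s, {ω | s ∈ E ω}ᶜ := by
      ext ω
      simp only [Set.mem_setOf_eq, Set.mem_union, Set.mem_iUnion, Set.mem_iInter,
        Set.mem_compl_iff]
      constructor
      · intro h
        by_cases hne : (E ω).Nonempty
        · exact Or.inl ⟨T ω, h, Nat.sInf_mem hne⟩
        · exact Or.inr fun s hs => hne ⟨s, hs⟩
      · rintro (⟨s, hst, hsE⟩ | hall)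
        · exact le_trans (Nat.sInf_le hsE) hst
        · have : E ω = ∅ := Set.eq_empty_iff_forall_notMem.2 hall
          show sInf (E ω) ≤ t
          rw [this, Nat.sInf_empty]
          exact Nat.zero_le t
    rw [heq]
    exact (MeasurableSet.iUnion fun s => MeasurableSet.iUnion fun _ => hEmeas s).union
      (MeasurableSet.iInter fun s => (hEmeas s).compl)
  have hTmeas : Measurable T := by
    apply measurable_to_countable'
    intro t
    match t with
    | 0 =>
      have : T ⁻¹' {0} = {ω | T ω ≤ 0} := by
        ext ω; simp [Nat.le_zero]
      rw [this]; exact hTle 0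
    | (t+1) =>
      have : T ⁻¹' {t+1} = {ω | T ω ≤ t+1} \ {ω | T ω ≤ t} := by
        ext ω
        simp only [Set.mem_preimage, Set.mem_singleton_iff, Set.mem_diff, Set.mem_setOf_eq]
        omega
      rw [this]; exact (hTle (t+1)).diff (hTle t)
  set bot : Set Ω := {ω | X (T ω) ω < a} with hbot_def
  have hbot_eq : bot = ⋃ t, (T ⁻¹' {t} ∩ X t ⁻¹' Set.Iio a) := by
    ext ω
    simp only [hbot_def, Set.mem_setOf_eq, Set.mem_iUnion, Set.mem_inter_iff,
      Set.mem_preimage, Set.mem_singleton_iff, Set.mem_Iio]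
    exact ⟨fun h => ⟨T ω, rfl, h⟩, fun ⟨t, h1, h2⟩ => h1 ▸ h2⟩
  have hbot_meas : MeasurableSet bot := by
    rw [hbot_eq]
    exact MeasurableSet.iUnion fun t =>
      (hTmeas (measurableSet_singleton t)).inter ((hXm t) measurableSet_Iio)
  -- integrability of W
  have hXTm : Measurable (fun ω => X (T ω) ω) := by
    have h1 : Measurable (fun p : Ω × ℕ => X p.2 p.1) :=
      measurable_from_prod_countable_left fun t => hXm t
    exact h1.comp (measurable_id.prodMk hTmeas)
  have hWm : Measurable W := Real.measurable_exp.comp ((hXTm.const_mul lam).neg)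
  have hWint : Integrable W μ := by
    refine hbint _ 1 hWm.aestronglyMeasurable (ae_of_all _ fun ω => ?_)
    rw [abs_of_pos (hS0 (T ω) ω)]
    exact hS1 (T ω) ω
  -- final splitting
  have hptW : ∀ᵐ ω ∂μ, W ω ≤ bot.indicator (fun _ => (1:ℝ)) ω + Real.exp (-β) := by
    filter_upwards [hae_ne] with ω hne
    by_cases hb : ω ∈ bot
    · rw [Set.indicator_of_mem hb]
      have h1 := hS1 (T ω) ω
      have h2 := (Real.exp_pos (-β)).le
      show S (T ω) ω ≤ 1 + Real.exp (-β)
      linarith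
    · rw [Set.indicator_of_notMem hb, zero_add]
      have hTE : T ω ∈ E ω := Nat.sInf_mem hne
      have hna : ¬ X (T ω) ω < a := hb
      rcases hTE with h | h
      · exact absurd h hna
      · show Real.exp (-(lam * X (T ω) ω)) ≤ Real.exp (-β)
        apply Real.exp_le_exp.2
        have : lam * n ≤ lam * X (T ω) ω := mul_le_mul_of_nonneg_left h.le hlam0.le
        rw [← hlamn]
        linarith
  have hsplit : ∫ ω, W ω ∂μ ≤ (μ bot).toReal + Real.exp (-β) := by
    have hii : Integrable (bot.indicator (fun _ => (1:ℝ))) μ :=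
      (integrable_const _).indicator hbot_meas
    calc ∫ ω, W ω ∂μ ≤ ∫ ω, (bot.indicator (fun _ => (1:ℝ)) ω + Real.exp (-β)) ∂μ :=
          integral_mono_ae hWint (hii.add (integrable_const _)) hptW
      _ = (μ bot).toReal + Real.exp (-β) := by
          rw [integral_add hii (integrable_const _), integral_indicator_const _ hbot_meas]
          simp; rfl
  constructor
  · exact hconc1
  · have hν : Real.exp (-(β*γ)) - Real.exp (-β) ≤ (μ bot).toReal := by linarith
    have hfin : ENNReal.ofReal (Real.exp (-(β*γ)) - Real.exp (-β)) ≤ μ bot := by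
      calc ENNReal.ofReal (Real.exp (-(β*γ)) - Real.exp (-β))
          ≤ ENNReal.ofReal ((μ bot).toReal) := ENNReal.ofReal_le_ofReal hν
        _ = μ bot := ENNReal.ofReal_toReal (measure_ne_top μ _)
    have : Real.exp (-(β * γ)) - Real.exp (-β) = Real.exp (-(β * γ)) - Real.exp (-β) := rfl
    exact hfin
end

section
/- Let x > 0 be large, δ ∈ (0,1), and y > x^{(2-δ)/(2-2δ)}. Then (y - x)^{2-δ} - x^{2-δ} ≥ x^{2 + δ²/(2-2δ)}·(1 + o(1)) as x → ∞; in particular (y-x)^{2-δ} - x^{2-δ} / x² → ∞. -/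
open Filter

/-- For `δ ∈ (0,1)` and `y = y(x) > x^{(2-δ)/(2-2δ)}`, one has
`(y - x)^{2-δ} - x^{2-δ} ≥ x^{2 + δ²/(2-2δ)}·(1 + o(1))` as `x → ∞`; in particular
`((y-x)^{2-δ} - x^{2-δ})/x² → ∞`. -/
theorem stmt_18 (δ : ℝ) (hδ : δ ∈ Set.Ioo (0 : ℝ) 1)
    (y : ℝ → ℝ) (hy : ∀ x : ℝ, 0 < x → x ^ ((2 - δ) / (2 - 2 * δ)) < y x) :
    (∃ e : ℝ → ℝ, Tendsto e atTop (nhds 0) ∧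
      ∀ᶠ x in atTop,
        (y x - x) ^ (2 - δ) - x ^ (2 - δ) ≥ x ^ (2 + δ ^ 2 / (2 - 2 * δ)) * (1 + e x)) ∧
    Tendsto (fun x => ((y x - x) ^ (2 - δ) - x ^ (2 - δ)) / x ^ 2) atTop atTop := by
  obtain ⟨hδ0, hδ1⟩ := hδ
  set α := (2 - δ) / (2 - 2 * δ) with hα
  set β := 2 + δ ^ 2 / (2 - 2 * δ) with hβ
  have h2δ : 0 < 2 - 2 * δ := by linarith
  have hαβ : α * (2 - δ) = β := by
    rw [hα, hβ]
    field_simp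
    ring
  have hα1 : 1 < α := by
    rw [hα, lt_div_iff₀ h2δ]; nlinarith
  have hβ2 : 2 < β := by
    have : 0 < δ ^ 2 / (2 - 2 * δ) := div_pos (by positivity) h2δ
    rw [hβ]; linarith
  set e : ℝ → ℝ := fun x => (1 - x ^ (1 - α)) ^ (2 - δ) - 1 - x ^ ((2 - δ) - β) with he
  have h1 : Tendsto (fun x : ℝ => x ^ (1 - α)) atTop (nhds 0) := by
    have := tendsto_rpow_neg_atTop (y := α - 1) (by linarith)
    simpa [neg_sub] using this
  have h2 : Tendsto (fun x : ℝ => x ^ ((2 - δ) - β)) atTop (nhds 0) := by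
    have := tendsto_rpow_neg_atTop (y := β - (2 - δ)) (by linarith)
    simpa [neg_sub] using this
  have hetend : Tendsto e atTop (nhds 0) := by
    have h3 : Tendsto (fun x : ℝ => (1 - x ^ (1 - α)) ^ (2 - δ)) atTop (nhds 1) := by
      have ht : Tendsto (fun x : ℝ => 1 - x ^ (1 - α)) atTop (nhds 1) := by
        simpa using (tendsto_const_nhds.sub h1)
      have := ht.rpow (tendsto_const_nhds (x := (2 - δ))) (Or.inl one_ne_zero)
      simpa using this
    have := (h3.sub (tendsto_const_nhds (x := (1:ℝ)))).sub h2
    simpa [he] using this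
  have key : ∀ x : ℝ, 1 ≤ x → x ^ β * (1 + e x) ≤ (y x - x) ^ (2 - δ) - x ^ (2 - δ) := by
    intro x hx
    have hx0 : 0 < x := lt_of_lt_of_le one_pos hx
    have hxle1 : x ^ (1 - α) ≤ 1 := by
      have := Real.rpow_le_rpow_of_exponent_le hx (by linarith : 1 - α ≤ 0)
      simpa using this
    have hnn : 0 ≤ 1 - x ^ (1 - α) := by linarith
    have hxα : x ≤ x ^ α := by
      have := Real.rpow_le_rpow_of_exponent_le hx (le_of_lt hα1)
      simpa using this
    have hxαy : x ^ α ≤ y x := (hy x hx0).le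
    have hsub : 0 ≤ x ^ α - x := by linarith
    have eA : x ^ α * x ^ (1 - α) = x := by
      rw [← Real.rpow_add hx0]; norm_num
    have eB : x ^ α * (1 - x ^ (1 - α)) = x ^ α - x := by
      rw [mul_sub, mul_one, eA]
    have eC : x ^ β * (1 - x ^ (1 - α)) ^ (2 - δ) = (x ^ α - x) ^ (2 - δ) := by
      rw [← hαβ, Real.rpow_mul hx0.le,
        ← Real.mul_rpow (Real.rpow_nonneg hx0.le _) hnn, eB]
    have eD : x ^ β * x ^ ((2 - δ) - β) = x ^ (2 - δ) := by
      rw [← Real.rpow_add hx0]; ring_nf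
    have hE : 1 + e x = (1 - x ^ (1 - α)) ^ (2 - δ) - x ^ ((2 - δ) - β) := by
      simp only [he]; ring
    have hid : x ^ β * (1 + e x) = (x ^ α - x) ^ (2 - δ) - x ^ (2 - δ) := by
      rw [hE, mul_sub, eC, eD]
    rw [hid]
    have hmono : (x ^ α - x) ^ (2 - δ) ≤ (y x - x) ^ (2 - δ) :=
      Real.rpow_le_rpow hsub (by linarith) (by linarith)
    linarith
  constructor
  · refine ⟨e, hetend, ?_⟩
    filter_upwards [eventually_ge_atTop (1 : ℝ)] with x hx
    exact key x hx
  · have hmono : ∀ x : ℝ, 1 ≤ x →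
        x ^ (β - 2) * (1 + e x) ≤ ((y x - x) ^ (2 - δ) - x ^ (2 - δ)) / x ^ 2 := by
      intro x hx
      have hx0 : 0 < x := lt_of_lt_of_le one_pos hx
      have h2 : (0:ℝ) < x ^ 2 := by positivity
      rw [le_div_iff₀ h2]
      have hp : x ^ (β - 2) * x ^ 2 = x ^ β := by
        rw [← Real.rpow_natCast x 2, ← Real.rpow_add hx0]
        norm_num
      calc x ^ (β - 2) * (1 + e x) * x ^ 2 = x ^ (β - 2) * x ^ 2 * (1 + e x) := by ring
        _ = x ^ β * (1 + e x) := by rw [hp]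
        _ ≤ _ := key x hx
    have hlim : Tendsto (fun x => x ^ (β - 2) * (1 + e x)) atTop atTop := by
      apply Tendsto.atTop_mul_pos (by norm_num : (0:ℝ) < 1)
        (tendsto_rpow_atTop (by linarith))
      simpa using (tendsto_const_nhds (x := (1:ℝ))).add hetend
    refine tendsto_atTop_mono' atTop ?_ hlim
    filter_upwards [eventually_ge_atTop (1 : ℝ)] with x hx using hmono x hx
end
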